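/- Let V ⊆ S_e be a k-subspace of dimension t ≥ 2 spanned by forms of degree e ≥ 2, and suppose h_1(V) = r (i.e., the span of the order-(e−1) partial derivatives of V is all of S_1, so the associated level algebra has codimension r). If h_{e−1}(V) ≥ t·(r−1), then there exists a nonzero form F ∈ V with h_1(F) = r (i.e., there exists a Gorenstein quotient of the same socle degree having codimension r). -/

import Mathlib

open MvPolynomial

/-- One step of differentiation: the span of all first partial derivatives of elements of `W`. -/
noncomputable def derStep (k : Type*) [Field k] {σ : Type*}
    (W : Submodule k (MvPolynomial σ k)) : Submodule k (MvPolynomial σ k) :=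
  Submodule.span k (⋃ i : σ, pderiv i '' (W : Set (MvPolynomial σ k)))

/-- For `W ⊆ S_e` and `u ≤ e`, `hvec k e W u = h_u(W)` is the dimension of the space `D_u(W)`
spanned by the order `e - u` partial derivatives of the elements of `W`. -/
noncomputable def hvec (k : Type*) [Field k] {σ : Type*} (e : ℕ)
    (W : Submodule k (MvPolynomial σ k)) (u : ℕ) : ℕ :=
  Module.finrank k ((derStep k)^[e - u] W)



section Aux
variable {σ : Type*} [DecidableEq σ] {R : Type*} [CommSemiring R]

lemma cor26_coeff_pderiv (i : σ) (f : MvPolynomial σ R) (d : σ →₀ ℕ) :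
    coeff d (pderiv i f) = (d i + 1 : ℕ) * coeff (d + Finsupp.single i 1) f := by
  induction f using MvPolynomial.induction_on' with
  | add p q hp hq => simp [coeff_add, hp, hq, mul_add]
  | monomial s a =>
    rw [pderiv_monomial, coeff_monomial, coeff_monomial]
    by_cases h : s = d + Finsupp.single i 1
    · subst h
      rw [if_pos (add_tsub_cancel_right _ _), if_pos rfl, Finsupp.add_apply,
        Finsupp.single_eq_same]
      push_cast
      ring
    · rw [if_neg h, mul_zero]
      by_cases h2 : s - Finsupp.single i 1 = d
      · rw [if_pos h2]
        have hsi : s i = 0 := by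
          by_contra hne
          have hle : Finsupp.single i 1 ≤ s := Finsupp.single_le_iff.2 (by omega)
          exact h (by rw [← h2, tsub_add_cancel_of_le hle])
        rw [hsi]
        simp
      · rw [if_neg h2]

lemma cor26_pderiv_comm (i j : σ) (f : MvPolynomial σ R) :
    pderiv i (pderiv j f) = pderiv j (pderiv i f) := by
  apply MvPolynomial.ext
  intro d
  rw [cor26_coeff_pderiv, cor26_coeff_pderiv, cor26_coeff_pderiv, cor26_coeff_pderiv]
  by_cases hij : i = j
  · subst hij; rfl
  · have h1 : ((d + Finsupp.single j 1) : σ →₀ ℕ) i = d i := by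
      rw [Finsupp.add_apply, Finsupp.single_apply, if_neg (Ne.symm hij), add_zero]
    have h2 : ((d + Finsupp.single i 1) : σ →₀ ℕ) j = d j := by
      rw [Finsupp.add_apply, Finsupp.single_apply, if_neg hij, add_zero]
    rw [h1, h2, add_right_comm]
    push_cast
    ring

lemma cor26_degree_add (a b : σ →₀ ℕ) : (a + b).degree = a.degree + b.degree := by
  simp [Finsupp.degree_eq_weight_one, map_add]

lemma cor26_degree_single (i : σ) (n : ℕ) : (Finsupp.single i n).degree = n := by
  by_cases hn : n = 0
  · simp [hn]
  · rw [Finsupp.degree_apply, Finsupp.support_single_ne_zero _ hn, Finset.sum_singleton,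
      Finsupp.single_eq_same]

lemma cor26_isHomogeneous_pderiv {f : MvPolynomial σ R} {n : ℕ} (hf : f.IsHomogeneous n)
    (i : σ) : (pderiv i f).IsHomogeneous (n - 1) := by
  intro d hd
  rw [cor26_coeff_pderiv] at hd
  have h2 : coeff (d + Finsupp.single i 1) f ≠ 0 := right_ne_zero_of_mul hd
  have hdeg : (d + Finsupp.single i 1).degree = n := by
    rw [Finsupp.degree_eq_weight_one]; exact hf h2
  rw [cor26_degree_add, cor26_degree_single] at hdeg
  show Finsupp.weight 1 d = n - 1
  rw [show (1 : σ → ℕ) = fun _ => 1 from rfl, ← Finsupp.degree_eq_weight_one]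
  omega

lemma cor26_degree_one_single (d : σ →₀ ℕ) (hd : d.degree = 1) :
    ∃ i, d = Finsupp.single i 1 := by
  have hne : d ≠ 0 := by intro h; rw [h] at hd; simp at hd
  obtain ⟨i, hi⟩ := Finsupp.support_nonempty_iff.2 hne
  have hi' : d i ≠ 0 := Finsupp.mem_support_iff.1 hi
  have h1 : d i ≤ 1 := hd ▸ Finsupp.le_degree i d
  refine ⟨i, Finsupp.ext fun j => ?_⟩
  by_cases hj : i = j
  · subst hj; rw [Finsupp.single_eq_same]; omega
  · rw [Finsupp.single_apply, if_neg hj]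
    by_contra hdj
    have hjmem : j ∈ d.support := Finsupp.mem_support_iff.2 hdj
    have hsub : ({i, j} : Finset σ) ⊆ d.support := by
      intro x hx
      rcases Finset.mem_insert.1 hx with h | h
      · exact h ▸ hi
      · exact (Finset.mem_singleton.1 h) ▸ hjmem
    have hle : ∑ x ∈ ({i, j} : Finset σ), d x ≤ d.degree :=
      Finset.sum_le_sum_of_subset hsub
    rw [Finset.sum_insert (by simp [hj]), Finset.sum_singleton] at hle
    omega
end Aux

section Aux2
variable {k : Type*} [Field k]

lemma cor26_derStep_eq {σ : Type*} (W : Submodule k (MvPolynomial σ k)) :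
    derStep k W = ⨆ i : σ, W.map (pderiv i).toLinearMap := by
  rw [derStep, Submodule.span_iUnion]
  refine iSup_congr fun i => ?_
  rw [show (⇑(pderiv i) '' (W : Set (MvPolynomial σ k)))
      = ⇑(pderiv (R := k) i).toLinearMap '' (W : Set (MvPolynomial σ k)) from rfl,
    ← Submodule.map_coe, Submodule.span_eq]

lemma cor26_derStep_iSup {σ : Type*} {ι : Sort*} (p : ι → Submodule k (MvPolynomial σ k)) :
    derStep k (⨆ j, p j) = ⨆ j, derStep k (p j) := by
  simp_rw [cor26_derStep_eq, Submodule.map_iSup]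
  exact iSup_comm

lemma cor26_derStep_fd {σ : Type*} [Finite σ] (W : Submodule k (MvPolynomial σ k))
    [FiniteDimensional k W] : FiniteDimensional k (derStep k W) := by
  rw [cor26_derStep_eq]
  infer_instance

lemma cor26_iter_derStep_fd {σ : Type*} [Finite σ] (W : Submodule k (MvPolynomial σ k))
    [FiniteDimensional k W] (m : ℕ) : FiniteDimensional k ((derStep k)^[m] W) := by
  induction m with
  | zero => exact ‹FiniteDimensional k W›
  | succ m ih =>
    rw [Function.iterate_succ_apply']
    exact @cor26_derStep_fd k _ σ _ _ ih

lemma cor26_derStep_le_homog {σ : Type*} {W : Submodule k (MvPolynomial σ k)} {n : ℕ}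
    (h : W ≤ homogeneousSubmodule σ k n) :
    derStep k W ≤ homogeneousSubmodule σ k (n - 1) := by
  classical
  rw [cor26_derStep_eq]
  refine iSup_le fun i => ?_
  rw [Submodule.map_le_iff_le_comap]
  intro x hx
  exact (mem_homogeneousSubmodule _ _).2
    (cor26_isHomogeneous_pderiv ((mem_homogeneousSubmodule _ _).1 (h hx)) i)

lemma cor26_iter_derStep_le_homog {σ : Type*} {W : Submodule k (MvPolynomial σ k)} {n : ℕ}
    (h : W ≤ homogeneousSubmodule σ k n) (m : ℕ) :
    (derStep k)^[m] W ≤ homogeneousSubmodule σ k (n - m) := by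
  induction m with
  | zero => simpa using h
  | succ m ih =>
    rw [Function.iterate_succ_apply']
    have := cor26_derStep_le_homog ih
    rwa [Nat.sub_sub] at this

variable {r : ℕ}

noncomputable def Dop (c : Fin r → k) :
    MvPolynomial (Fin r) k →ₗ[k] MvPolynomial (Fin r) k :=
  ∑ i, c i • (pderiv i).toLinearMap

lemma Dop_apply (c : Fin r → k) (f : MvPolynomial (Fin r) k) :
    Dop c f = ∑ i, c i • pderiv i f := by
  simp [Dop]

noncomputable def LFm (F : MvPolynomial (Fin r) k) :
    (Fin r → k) →ₗ[k] MvPolynomial (Fin r) k :=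
  Fintype.linearCombination k (fun i => pderiv i F)

lemma LFm_apply (F : MvPolynomial (Fin r) k) (c : Fin r → k) :
    LFm F c = Dop c F := by
  simp [LFm, Fintype.linearCombination_apply, Dop_apply]

lemma Dop_pderiv (c : Fin r → k) (i : Fin r) (f : MvPolynomial (Fin r) k) :
    Dop c (pderiv i f) = pderiv i (Dop c f) := by
  simp only [Dop_apply, map_sum, Derivation.map_smul, cor26_pderiv_comm i]

lemma cor26_coeff0_Dop (c : Fin r → k) (G : MvPolynomial (Fin r) k) :
    coeff 0 (Dop c G) = ∑ i, c i * coeff (Finsupp.single i 1) G := by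
  rw [Dop_apply, MvPolynomial.coeff_sum]
  refine Finset.sum_congr rfl fun i _ => ?_
  rw [coeff_smul, cor26_coeff_pderiv, smul_eq_mul]
  simp

lemma cor26_derStep_le_ker {c : Fin r → k} {W : Submodule k (MvPolynomial (Fin r) k)}
    (h : W ≤ LinearMap.ker (Dop c)) : derStep k W ≤ LinearMap.ker (Dop c) := by
  rw [cor26_derStep_eq]
  refine iSup_le fun i => ?_
  rw [Submodule.map_le_iff_le_comap]
  intro x hx
  have hx0 : Dop c x = 0 := h hx
  simp only [Submodule.mem_comap, LinearMap.mem_ker]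
  show Dop c (pderiv i x) = 0
  rw [Dop_pderiv, hx0, map_zero]

lemma cor26_iter_derStep_le_ker {c : Fin r → k} {W : Submodule k (MvPolynomial (Fin r) k)}
    (h : W ≤ LinearMap.ker (Dop c)) (m : ℕ) :
    (derStep k)^[m] W ≤ LinearMap.ker (Dop c) := by
  induction m with
  | zero => simpa using h
  | succ m ih => rw [Function.iterate_succ_apply']; exact cor26_derStep_le_ker ih

lemma cor26_eq_zero_of_pderiv [CharZero k] {σ : Type*} [DecidableEq σ]
    {f : MvPolynomial σ k} {n : ℕ} (hf : f.IsHomogeneous n) (hn : n ≠ 0)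
    (h : ∀ i, pderiv i f = 0) : f = 0 := by
  apply MvPolynomial.ext
  intro d
  rw [coeff_zero]
  by_contra hc
  have hdeg : d.degree = n := by rw [Finsupp.degree_eq_weight_one]; exact hf hc
  have hd0 : d ≠ 0 := by rintro rfl; rw [map_zero] at hdeg; omega
  obtain ⟨i, hi⟩ := Finsupp.support_nonempty_iff.2 hd0
  have hi' : d i ≠ 0 := Finsupp.mem_support_iff.1 hi
  have hcongr := congrArg (coeff (d - Finsupp.single i 1)) (h i)
  rw [cor26_coeff_pderiv, coeff_zero] at hcongr
  have hle : Finsupp.single i 1 ≤ d := Finsupp.single_le_iff.2 (by omega)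
  rw [tsub_add_cancel_of_le hle] at hcongr
  have hcoe : ((d - Finsupp.single i 1) : σ →₀ ℕ) i + 1 = d i := by
    rw [Finsupp.tsub_apply, Finsupp.single_eq_same]; omega
  rw [hcoe] at hcongr
  rcases mul_eq_zero.1 hcongr with h1 | h2
  · exact (Nat.cast_ne_zero.2 hi') h1
  · exact hc h2

lemma cor26_kill_of_kill_top [CharZero k] {c : Fin r → k} :
    ∀ n, 1 ≤ n → ∀ W : Submodule k (MvPolynomial (Fin r) k),
      W ≤ homogeneousSubmodule (Fin r) k n →
      (∀ G ∈ (derStep k)^[n - 1] W, Dop c G = 0) → ∀ g ∈ W, Dop c g = 0 := by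
  intro n hn
  induction n, hn using Nat.le_induction with
  | base =>
    intro W _ h g hg
    exact h g (by simpa using hg)
  | succ n hn ih =>
    intro W hW h g hg
    have hW' : derStep k W ≤ homogeneousSubmodule (Fin r) k n := by
      have := cor26_derStep_le_homog hW
      simpa using this
    have hiter : (derStep k)^[n] W = (derStep k)^[n - 1] (derStep k W) := by
      conv_lhs => rw [show n = (n - 1) + 1 by omega]
      rw [Function.iterate_succ_apply]
    have hkill : ∀ G ∈ (derStep k)^[n - 1] (derStep k W), Dop c G = 0 := by
      intro G hG
      exact h G (by rw [show n + 1 - 1 = n from rfl, hiter]; exact hG)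
    have hder : ∀ x ∈ derStep k W, Dop c x = 0 := ih (derStep k W) hW' hkill
    have hpd : ∀ i, pderiv i (Dop c g) = 0 := by
      intro i
      have hmem : pderiv i g ∈ derStep k W := by
        rw [cor26_derStep_eq]
        exact le_iSup (fun i => W.map (pderiv i).toLinearMap) i
          (Submodule.mem_map_of_mem hg)
      rw [← Dop_pderiv]
      exact hder _ hmem
    have hg' : (Dop c g).IsHomogeneous n := by
      have hmem : Dop c g ∈ homogeneousSubmodule (Fin r) k n := by
        rw [Dop_apply]
        refine Submodule.sum_mem _ fun i _ => Submodule.smul_mem _ _ ?_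
        have := cor26_isHomogeneous_pderiv ((mem_homogeneousSubmodule _ _).1 (hW hg)) i
        simpa using (mem_homogeneousSubmodule _ _).2 this
      exact (mem_homogeneousSubmodule _ _).1 hmem
    exact cor26_eq_zero_of_pderiv hg' (by omega) hpd

end Aux2
section Aux3
variable {k : Type*} [Field k] {r : ℕ}
open Module

noncomputable def phiMap : MvPolynomial (Fin r) k →ₗ[k] (Fin r → k) :=
  LinearMap.pi fun i => lcoeff k (Finsupp.single i 1)

lemma phiMap_apply (G : MvPolynomial (Fin r) k) (i : Fin r) :
    phiMap G i = coeff (Finsupp.single i 1) G := rfl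

lemma cor26_eq_zero_of_homog1 {G : MvPolynomial (Fin r) k} (hG : G.IsHomogeneous 1)
    (h : ∀ i, coeff (Finsupp.single i 1) G = 0) : G = 0 := by
  apply MvPolynomial.ext
  intro d
  rw [coeff_zero]
  by_contra hc
  have hdeg : d.degree = 1 := by rw [Finsupp.degree_eq_weight_one]; exact hG hc
  obtain ⟨i, rfl⟩ := cor26_degree_one_single d hdeg
  exact hc (h i)

lemma cor26_phi_inj {D : Submodule k (MvPolynomial (Fin r) k)}
    (hD : D ≤ homogeneousSubmodule (Fin r) k 1) :
    Function.Injective (phiMap.comp D.subtype) := by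
  rw [← LinearMap.ker_eq_bot, Submodule.eq_bot_iff]
  rintro ⟨G, hG⟩ hker
  rw [LinearMap.mem_ker] at hker
  have hkill : ∀ i, coeff (Finsupp.single i 1) G = 0 := by
    intro i
    have := congrFun hker i
    simpa [phiMap_apply] using this
  have : G = 0 := cor26_eq_zero_of_homog1 ((mem_homogeneousSubmodule _ _).1 (hD hG)) hkill
  exact Subtype.ext this

set_option maxHeartbeats 1000000 in
lemma cor26_finrank_le_of_kill {D : Submodule k (MvPolynomial (Fin r) k)}
    (hD : D ≤ homogeneousSubmodule (Fin r) k 1) {c : Fin r → k} (hc : c ≠ 0)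
    (h : ∀ G ∈ D, ∑ i, c i * coeff (Finsupp.single i 1) G = 0) :
    finrank k D ≤ r - 1 := by
  classical
  set dot : (Fin r → k) →ₗ[k] k := Fintype.linearCombination k c with hdot
  set ψ : D →ₗ[k] (Fin r → k) := phiMap.comp D.subtype with hψ
  have h1 : finrank k D = finrank k (LinearMap.range ψ) :=
    (LinearMap.finrank_range_of_inj (cor26_phi_inj hD)).symm
  have h2 : LinearMap.range ψ ≤ LinearMap.ker dot := by
    rintro _ ⟨⟨G, hG⟩, rfl⟩
    rw [LinearMap.mem_ker, hdot, Fintype.linearCombination_apply]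
    have := h G hG
    simp only [hψ, LinearMap.comp_apply, Submodule.coe_subtype, phiMap_apply, smul_eq_mul]
    rw [← this]
    exact Finset.sum_congr rfl fun i _ => mul_comm _ _
  have hrn := LinearMap.finrank_range_add_finrank_ker dot
  rw [Module.finrank_fin_fun] at hrn
  have hrange : finrank k (LinearMap.range dot) ≠ 0 := by
    obtain ⟨i, hi⟩ := Function.ne_iff.1 hc
    intro h0
    have hbot : LinearMap.range dot = ⊥ := Submodule.finrank_eq_zero.1 h0
    have hmem : c i ∈ LinearMap.range dot := ⟨Pi.single i 1, by simp [hdot]⟩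
    rw [hbot, Submodule.mem_bot] at hmem
    exact hi (by simpa using hmem)
  have h3 : finrank k (LinearMap.ker dot) ≤ r - 1 := by omega
  calc finrank k D = finrank k (LinearMap.range ψ) := h1
    _ ≤ finrank k (LinearMap.ker dot) := Submodule.finrank_mono h2
    _ ≤ r - 1 := h3

end Aux3
section Aux4
variable {k : Type*} [Field k] {r : ℕ}
open Module

lemma cor26_derStep_span_singleton (F : MvPolynomial (Fin r) k) :
    derStep k (Submodule.span k {F}) = LinearMap.range (LFm F) := by
  rw [cor26_derStep_eq, LFm, Fintype.range_linearCombination]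
  have hmap : ∀ i : Fin r, Submodule.map (pderiv (R := k) i).toLinearMap
      (Submodule.span k {F}) = Submodule.span k {pderiv i F} := by
    intro i
    rw [Submodule.map_span, Set.image_singleton]
    rfl
  simp_rw [hmap]
  rw [Submodule.span_range_eq_iSup]

lemma cor26_iSup_fin_succ {α : Type*} [CompleteLattice α] {t : ℕ} (f : Fin (t + 1) → α) :
    (⨆ j, f j) = (⨆ j : Fin t, f j.castSucc) ⊔ f (Fin.last t) := by
  apply le_antisymm
  · refine iSup_le fun j => ?_
    cases j using Fin.lastCases with
    | last => exact le_sup_right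
    | cast j => exact le_trans (le_iSup (fun j : Fin t => f j.castSucc) j) le_sup_left
  · exact sup_le (iSup_le fun j => le_iSup f j.castSucc) (le_iSup f (Fin.last t))

lemma cor26_finrank_iSup_le {M : Type*} [AddCommGroup M] [Module k M] :
    ∀ {t : ℕ} (U : Fin t → Submodule k M), (∀ j, FiniteDimensional k (U j)) →
      finrank k ↥(⨆ j, U j) ≤ ∑ j, finrank k (U j) := by
  intro t
  induction t with
  | zero =>
    intro U _
    rw [iSup_of_empty]
    simp [finrank_bot]
  | succ t ih =>
    intro U hU
    haveI := hU
    haveI : ∀ j : Fin t, FiniteDimensional k (U j.castSucc) := fun j => hU _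
    haveI : FiniteDimensional k ↥(⨆ j : Fin t, U j.castSucc) := inferInstance
    rw [cor26_iSup_fin_succ U, Fin.sum_univ_castSucc]
    have hsup := Submodule.finrank_sup_add_finrank_inf_eq
      (⨆ j : Fin t, U j.castSucc) (U (Fin.last t))
    have hW : finrank k ↥(⨆ j : Fin t, U j.castSucc) ≤ ∑ j : Fin t, finrank k ↥(U j.castSucc) :=
      ih _ (fun j => hU _)
    omega

lemma cor26_indep_of_finrank {M : Type*} [AddCommGroup M] [Module k M] :
    ∀ {t : ℕ} (U : Fin t → Submodule k M), (∀ j, FiniteDimensional k (U j)) →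
      (∑ j, finrank k (U j)) ≤ finrank k ↥(⨆ j, U j) →
      ∀ u : Fin t → M, (∀ j, u j ∈ U j) → (∑ j, u j) = 0 → ∀ j, u j = 0 := by
  intro t
  induction t with
  | zero => intro U _ _ u _ _ j; exact j.elim0
  | succ t ih =>
    intro U hU hrank u hu husum
    haveI := hU
    haveI : ∀ j : Fin t, FiniteDimensional k (U j.castSucc) := fun j => hU _
    set W := ⨆ j : Fin t, U j.castSucc with hWdef
    haveI : FiniteDimensional k W := inferInstance
    have hWle : finrank k W ≤ ∑ j : Fin t, finrank k (U j.castSucc) :=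
      cor26_finrank_iSup_le _ (fun j => hU _)
    have hsup := Submodule.finrank_sup_add_finrank_inf_eq W (U (Fin.last t))
    have hdecomp : finrank k ↥(⨆ j, U j) = finrank k ↥(W ⊔ U (Fin.last t)) := by
      rw [cor26_iSup_fin_succ U]
    have hsum' : (∑ j : Fin (t+1), finrank k (U j))
        = (∑ j : Fin t, finrank k (U j.castSucc)) + finrank k (U (Fin.last t)) :=
      Fin.sum_univ_castSucc _
    have hinf0 : finrank k ↥(W ⊓ U (Fin.last t)) = 0 := by omega
    have hWge : (∑ j : Fin t, finrank k (U j.castSucc)) ≤ finrank k W := by omega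
    haveI : FiniteDimensional k ↥(W ⊓ U (Fin.last t)) :=
      Submodule.finiteDimensional_of_le (inf_le_left : W ⊓ U (Fin.last t) ≤ W)
    have hinf : W ⊓ U (Fin.last t) = ⊥ := Submodule.finrank_eq_zero.1 hinf0
    have hsplit : (∑ j : Fin t, u j.castSucc) + u (Fin.last t) = 0 := by
      rw [← Fin.sum_univ_castSucc]; exact husum
    have hlastmem : u (Fin.last t) ∈ W ⊓ U (Fin.last t) := by
      refine Submodule.mem_inf.2 ⟨?_, hu _⟩
      have : u (Fin.last t) = -(∑ j : Fin t, u j.castSucc) := by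
        rw [eq_neg_iff_add_eq_zero, add_comm]; exact hsplit
      rw [this]
      exact Submodule.neg_mem _ (Submodule.sum_mem _ fun j _ =>
        (le_iSup (fun j : Fin t => U j.castSucc) j) (hu j.castSucc))
    rw [hinf, Submodule.mem_bot] at hlastmem
    have hrest : ∀ j : Fin t, u j.castSucc = 0 := by
      refine ih (fun j => U j.castSucc) (fun j => hU _) hWge (fun j => u j.castSucc)
        (fun j => hu _) ?_
      rw [hlastmem, add_zero] at hsplit
      exact hsplit
    intro j
    cases j using Fin.lastCases with
    | last => exact hlastmem
    | cast j => exact hrest j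

end Aux4
section Aux5
variable {k : Type*} [Field k] {r : ℕ}
open Module

lemma cor26_homog0_eq_zero {G : MvPolynomial (Fin r) k} (hG : G.IsHomogeneous 0)
    (h0 : coeff 0 G = 0) : G = 0 := by
  apply MvPolynomial.ext
  intro d
  rw [coeff_zero]
  by_cases hd : d = 0
  · rw [hd]; exact h0
  · exact hG.coeff_eq_zero (by
      intro hdeg
      exact hd ((Finsupp.degree_eq_zero_iff d).1 hdeg))

set_option maxHeartbeats 1000000 in
lemma cor26_finrank_top_of_ker_bot [CharZero k] {e : ℕ} (he : 1 ≤ e)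
    {F : MvPolynomial (Fin r) k} (hF : F.IsHomogeneous e)
    (hker : ∀ c : Fin r → k, Dop c F = 0 → c = 0) :
    finrank k ((derStep k)^[e - 1] (Submodule.span k {F})) = r := by
  classical
  set D := (derStep k)^[e - 1] (Submodule.span k {F}) with hDdef
  have hspan : Submodule.span k {F} ≤ homogeneousSubmodule (Fin r) k e := by
    rw [Submodule.span_le, Set.singleton_subset_iff]
    exact (mem_homogeneousSubmodule _ _).2 hF
  have hDhom : D ≤ homogeneousSubmodule (Fin r) k 1 := by
    have := cor26_iter_derStep_le_homog hspan (e - 1)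
    rwa [show e - (e - 1) = 1 by omega] at this
  set ψ : D →ₗ[k] (Fin r → k) := phiMap.comp D.subtype with hψ
  have hinj : Function.Injective ψ := cor26_phi_inj hDhom
  have h1 : finrank k D = finrank k (LinearMap.range ψ) :=
    (LinearMap.finrank_range_of_inj hinj).symm
  have hle : finrank k D ≤ r := by
    have h2 : finrank k ↥(LinearMap.range ψ) ≤ finrank k (Fin r → k) :=
      Submodule.finrank_le _
    rw [Module.finrank_fin_fun] at h2
    omega
  by_contra hne
  have hlt : finrank k D < r := lt_of_le_of_ne hle hne
  have hnetop : LinearMap.range ψ ≠ ⊤ := by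
    intro htop
    rw [h1, htop, finrank_top, Module.finrank_fin_fun] at hlt
    omega
  obtain ⟨f, hf0, hfbot⟩ := Submodule.exists_dual_map_eq_bot_of_lt_top
    (lt_top_iff_ne_top.2 hnetop) inferInstance
  set c : Fin r → k := fun i => f (Pi.single i 1) with hcdef
  have hfv : ∀ v : Fin r → k, f v = ∑ i, v i * c i := by
    intro v
    conv_lhs => rw [pi_eq_sum_univ v]
    rw [map_sum]
    refine Finset.sum_congr rfl fun i _ => ?_
    rw [map_smul, smul_eq_mul]
    congr 1
    rw [hcdef]
    congr 1
    funext j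
    simp [Pi.single_apply, eq_comm]
  have hc0 : c ≠ 0 := by
    intro hc
    apply hf0
    apply LinearMap.ext
    intro v
    rw [hfv v, hc]
    simp
  have hkillD : ∀ G ∈ D, Dop c G = 0 := by
    intro G hG
    have hGhom : G.IsHomogeneous 1 := (mem_homogeneousSubmodule _ _).1 (hDhom hG)
    have hpair : coeff 0 (Dop c G) = 0 := by
      rw [cor26_coeff0_Dop]
      have hmem : phiMap G ∈ LinearMap.range ψ := ⟨⟨G, hG⟩, rfl⟩
      have hf0' : f (phiMap G) = 0 := by
        have hm2 := Submodule.mem_map_of_mem (f := f) hmem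
        rw [hfbot, Submodule.mem_bot] at hm2
        exact hm2
      rw [hfv] at hf0'
      rw [← hf0']
      exact Finset.sum_congr rfl fun i _ => by rw [phiMap_apply, mul_comm]
    have h0 : (Dop c G).IsHomogeneous 0 := by
      have hmem : Dop c G ∈ homogeneousSubmodule (Fin r) k 0 := by
        rw [Dop_apply]
        refine Submodule.sum_mem _ fun i _ => Submodule.smul_mem _ _ ?_
        have := cor26_isHomogeneous_pderiv hGhom i
        simpa using (mem_homogeneousSubmodule _ _).2 this
      exact (mem_homogeneousSubmodule _ _).1 hmem
    exact cor26_homog0_eq_zero h0 hpair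
  have hDF : Dop c F = 0 :=
    cor26_kill_of_kill_top e he (Submodule.span k {F}) hspan hkillD F
      (Submodule.mem_span_singleton_self F)
  exact hc0 (hker c hDF)

end Aux5

open Module

/-- Corollary 2.6: if `h_1(V) = r` and `h_{e-1}(V) ≥ t·(r - 1)`, then there is a Gorenstein
quotient of the same socle degree having codimension `r`, i.e. a nonzero `F ∈ V` with
`h_1(F) = r`. -/
theorem corollary_2_6 {k : Type*} [Field k] [CharZero k] {r : ℕ} (hr : 1 ≤ r)
    {e t : ℕ} (he : 2 ≤ e) (ht : 2 ≤ t)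
    (V : Submodule k (MvPolynomial (Fin r) k))
    (hVhom : ∀ f ∈ V, MvPolynomial.IsHomogeneous f e)
    (hVdim : Module.finrank k V = t)
    (hcodim : hvec k e V 1 = r)
    (hbound : hvec k e V (e - 1) ≥ t * (r - 1)) :
    ∃ F ∈ V, F ≠ 0 ∧ hvec k e (Submodule.span k {F}) 1 = r := by
  classical
  by_contra hcon
  push_neg at hcon
  haveI hVfd : FiniteDimensional k V :=
    FiniteDimensional.of_finrank_pos (by omega)
  -- every nonzero F in V has a dependency among derivatives
  have hker : ∀ F ∈ V, F ≠ 0 → ∃ c : Fin r → k, c ≠ 0 ∧ Dop c F = 0 := by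
    intro F hF hF0
    by_contra hno
    push_neg at hno
    have hK : ∀ c : Fin r → k, Dop c F = 0 → c = 0 := by
      intro c hc
      by_contra hc0
      exact hno c hc0 hc
    have hfin := cor26_finrank_top_of_ker_bot (by omega : 1 ≤ e) (hVhom F hF) hK
    exact hcon F hF hF0 hfin
  -- basis of V
  let b : Basis (Fin t) k V := (Module.finBasis k V).reindex (finCongr hVdim)
  let f : Fin t → MvPolynomial (Fin r) k := fun j => (b j : MvPolynomial (Fin r) k)
  have hfV : ∀ j, f j ∈ V := fun j => (b j).2
  have hspanV : Submodule.span k (Set.range f) = V := by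
    have hrange : Set.range f = V.subtype '' Set.range b := by
      rw [← Set.range_comp]; rfl
    rw [hrange, Submodule.span_image, b.span_eq, Submodule.map_top, Submodule.range_subtype]
  have hf0 : ∀ j, f j ≠ 0 := by
    intro j h
    exact b.ne_zero j (Subtype.ext h)
  set U : Fin t → Submodule k (MvPolynomial (Fin r) k) :=
    fun j => LinearMap.range (LFm (f j)) with hUdef
  have hUfd : ∀ j, FiniteDimensional k (U j) := fun j => inferInstance
  have hderV : derStep k V = ⨆ j, U j := by
    rw [← hspanV, Submodule.span_range_eq_iSup, cor26_derStep_iSup]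
    exact iSup_congr fun j => cor26_derStep_span_singleton (f j)
  have hUle : ∀ j, finrank k (U j) ≤ r - 1 := by
    intro j
    show finrank k ↥(LinearMap.range (LFm (f j))) ≤ r - 1
    obtain ⟨c, hc0, hcF⟩ := hker (f j) (hfV j) (hf0 j)
    have hckermem : c ∈ LinearMap.ker (LFm (f j)) := by
      rw [LinearMap.mem_ker, LFm_apply]; exact hcF
    have hkerpos : finrank k (LinearMap.ker (LFm (f j))) ≠ 0 := by
      intro h0
      have hbot := Submodule.finrank_eq_zero.1 h0
      rw [hbot, Submodule.mem_bot] at hckermem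
      exact hc0 hckermem
    have hrn := LinearMap.finrank_range_add_finrank_ker (LFm (f j))
    rw [Module.finrank_fin_fun] at hrn
    omega
  have hb1 : hvec k e V (e - 1) = finrank k (derStep k V) := by
    unfold hvec
    rw [show e - (e - 1) = 1 by omega, Function.iterate_one]
  have hbound' : t * (r - 1) ≤ finrank k ↥(⨆ j, U j) := by
    rw [← hderV, ← hb1]; exact hbound
  have hsumle : (∑ j, finrank k (U j)) ≤ finrank k ↥(⨆ j, U j) := by
    calc (∑ j, finrank k (U j)) ≤ ∑ _j : Fin t, (r - 1) :=
          Finset.sum_le_sum fun j _ => hUle j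
      _ = t * (r - 1) := by rw [Finset.sum_const, Finset.card_univ, Fintype.card_fin, smul_eq_mul]
      _ ≤ finrank k ↥(⨆ j, U j) := hbound'
  -- the sum of the basis
  have hgV : (∑ j, f j) ∈ V := Submodule.sum_mem _ fun j _ => hfV j
  have hg0 : (∑ j, f j) ≠ 0 := by
    intro h
    have hbsum : (∑ j, b j) = 0 := by
      apply Subtype.ext
      simp only [AddSubmonoidClass.coe_finset_sum, ZeroMemClass.coe_zero]
      exact h
    have hli := Fintype.linearIndependent_iff.1 b.linearIndependent (fun _ => (1 : k))
      (by simpa using hbsum) ⟨0, by omega⟩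
    exact one_ne_zero hli
  obtain ⟨c, hc0, hcg⟩ := hker _ hgV hg0
  have hsplit : (∑ j, Dop c (f j)) = 0 := by rw [← map_sum]; exact hcg
  have hallz : ∀ j, Dop c (f j) = 0 :=
    cor26_indep_of_finrank U hUfd hsumle (fun j => Dop c (f j))
      (fun j => ⟨c, LFm_apply _ _⟩) hsplit
  have hkillV : V ≤ LinearMap.ker (Dop c) := by
    rw [← hspanV, Submodule.span_le]
    rintro x ⟨j, rfl⟩
    exact LinearMap.mem_ker.2 (hallz j)
  have hD1 : (derStep k)^[e - 1] V ≤ homogeneousSubmodule (Fin r) k 1 := by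
    have h0 : V ≤ homogeneousSubmodule (Fin r) k e := fun x hx =>
      (mem_homogeneousSubmodule _ _).2 (hVhom x hx)
    have := cor26_iter_derStep_le_homog h0 (e - 1)
    rwa [show e - (e - 1) = 1 by omega] at this
  have hkillD : ∀ G ∈ (derStep k)^[e - 1] V,
      ∑ i, c i * MvPolynomial.coeff (Finsupp.single i 1) G = 0 := by
    intro G hG
    have hzero : Dop c G = 0 := cor26_iter_derStep_le_ker hkillV (e - 1) hG
    rw [← cor26_coeff0_Dop, hzero, coeff_zero]
  have hfin : finrank k ((derStep k)^[e - 1] V) ≤ r - 1 :=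
    cor26_finrank_le_of_kill hD1 hc0 hkillD
  have hcodim' : finrank k ((derStep k)^[e - 1] V) = r := hcodim
  omega
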